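/- Let n ≥ 1 and N ≥ 1 be integers, and let φ, ψ : ℝ^n → ℂ be C^∞ functions with compact support such that ∫ x^α φ(x) dx = 0 and ∫ x^α ψ(x) dx = 0 for every multi-index α with |α| ≤ N. For j ∈ ℤ, k ∈ ℤ^n write φ_{j,k}(x) = 2^{nj/2} φ(2^j x − k) and likewise ψ_{j',k'}(x) = 2^{nj'/2} ψ(2^{j'} x − k'). Then there is a constant C_N > 0 such that for all j, j' ∈ ℤ and all k, k' ∈ ℤ^n, |∫_{ℝ^n} φ_{j,k}(x) conj(ψ_{j',k'}(x)) dx| ≤ C_N · 2^{−|j−j'|(n/2+N)} · ( (2^{−j}+2^{−j'}) / (2^{−j}+2^{−j'}+|2^{−j}k−2^{−j'}k'|) )^{n+N}. -/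

import Mathlib

set_option maxHeartbeats 1000000

noncomputable section

open MeasureTheory Real Complex
open scoped ENNReal NNReal

/-- `ℝⁿ` modeled as functions `Fin n → ℝ`. -/
abbrev Vec (n : ℕ) : Type := Fin n → ℝ

/-- Integer lattice `ℤⁿ`. -/
abbrev IVec (n : ℕ) : Type := Fin n → ℤ

/-- The index set `E_n = {0,1}ⁿ \ {0}`, with `{0,1}ⁿ` modeled as `Fin n → Bool`. -/
abbrev En (n : ℕ) : Type := {ε : Fin n → Bool // ε ≠ fun _ => false}

/-- The Euclidean norm on `Vec n`. -/
def enorm2 {n : ℕ} (x : Vec n) : ℝ := Real.sqrt (∑ i, (x i) ^ 2)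

/-- `f_{j,k}(x) = 2^{nj/2} f(2^j x − k)`. -/
def scaleJK {n : ℕ} (f : Vec n → ℂ) (j : ℤ) (k : IVec n) : Vec n → ℂ :=
  fun x => (((2 : ℝ) ^ ((n : ℝ) * (j : ℝ) / 2) : ℝ) : ℂ) *
    f (fun i => (2 : ℝ) ^ j * x i - (k i : ℝ))

section helpers
variable {E F : Type*} [NormedAddCommGroup E] [NormedSpace ℝ E]
  [NormedAddCommGroup F] [NormedSpace ℝ F]

lemma my_fderiv_comp_const_add (h : E → F) (hd : Differentiable ℝ h) (c z : E) :
    fderiv ℝ (fun w => h (c + w)) z = fderiv ℝ h (c + z) := by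
  have h2 : HasFDerivAt (fun w : E => c + w) (ContinuousLinearMap.id ℝ E) z := by
    simpa using (hasFDerivAt_id z).const_add c
  have h3 := (hd (c + z)).hasFDerivAt.comp z h2
  have h4 := h3.fderiv
  simp only [ContinuousLinearMap.comp_id] at h4
  exact h4

lemma my_iteratedFDeriv_const_add (h : E → F) (hh : ContDiff ℝ (⊤ : ℕ∞) h) (c : E) :
    ∀ (m : ℕ) (z : E),
      iteratedFDeriv ℝ m (fun w => h (c + w)) z = iteratedFDeriv ℝ m h (c + z) := by
  intro m
  induction m with
  | zero => intro z; ext v; simp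
  | succ m IH =>
    intro z
    ext v
    rw [iteratedFDeriv_succ_apply_left, iteratedFDeriv_succ_apply_left]
    have e1 : (iteratedFDeriv ℝ m fun w => h (c + w)) =
        fun z => iteratedFDeriv ℝ m h (c + z) := funext IH
    rw [e1, my_fderiv_comp_const_add _ (hh.differentiable_iteratedFDeriv (by
      exact_mod_cast lt_top_iff_ne_top.2 (by simp))) c z]

lemma my_iterWithin {F : Type*} [NormedAddCommGroup F] [NormedSpace ℝ F] [CompleteSpace F]
    (f : ℝ → F) (hf : ContDiff ℝ (⊤ : ℕ∞) f) {s : Set ℝ} (hs : UniqueDiffOn ℝ s)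
    {x : ℝ} (hx : x ∈ s) (m : ℕ) :
    iteratedDerivWithin m f s x = iteratedDeriv m f x := by
  rw [iteratedDerivWithin_eq_iteratedFDerivWithin, iteratedDeriv_eq_iteratedFDeriv]
  congr 1
  exact (((contDiff_iff_ftaylorSeries.mp hf).hasFTaylorSeriesUpToOn
    s).eq_iteratedFDerivWithin_of_uniqueDiffOn (by exact_mod_cast le_top) hs hx).symm

end helpers

lemma my_moment_zero (n N : ℕ) (φ : Vec n → ℂ)
    (hφm : ∀ α : Fin n → ℕ, (∑ i, α i) ≤ N →
      (∫ x : Vec n, ((∏ i, (x i) ^ (α i) : ℝ) : ℂ) * φ x) = 0)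
    {m : ℕ} (hm : m ≤ N) (d : Fin m → Fin n) :
    (∫ y : Vec n, ((∏ j, y (d j) : ℝ) : ℂ) * φ y) = 0 := by
  classical
  set α : Fin n → ℕ := fun i => (Finset.univ.filter fun j => d j = i).card with hα
  have hsum : (∑ i, α i) = m := by
    rw [hα]
    rw [← Finset.card_eq_sum_card_fiberwise (fun j _ => Finset.mem_univ (d j))]
    simp
  have hprod : ∀ y : Vec n, (∏ j, y (d j)) = ∏ i, (y i) ^ (α i) := by
    intro y
    rw [← Finset.prod_fiberwise_of_maps_to (fun j _ => Finset.mem_univ (d j))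
      (fun j => y (d j))]
    refine Finset.prod_congr rfl fun i _ => ?_
    rw [Finset.prod_congr rfl (fun j hj => by rw [(Finset.mem_filter.1 hj).2]),
      Finset.prod_const]
  simp_rw [hprod]
  exact hφm α (by rw [hsum]; exact hm)

-- expansion of a continuous multilinear map at a constant vector
lemma my_expand (n m : ℕ) (T : ContinuousMultilinearMap ℝ (fun _ : Fin m => Vec n) ℂ)
    (w : Vec n) :
    T (fun _ => w) = ∑ d : Fin m → Fin n,
      (∏ j, w (d j)) • T (fun j => fun l => if d j = l then (1:ℝ) else 0) := by
  classical
  have hw : (fun _ : Fin m => w) = fun _ : Fin m => ∑ i : Fin n,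
      w i • (fun l => if i = l then (1:ℝ) else 0) := by
    funext _
    exact pi_eq_sum_univ w
  rw [hw]
  rw [T.map_sum]
  refine Finset.sum_congr rfl fun d _ => ?_
  exact T.map_smul_univ (fun j => w (d j))
    (fun j => fun l => if d j = l then (1:ℝ) else 0)

lemma my_key (n N : ℕ) (φ g : Vec n → ℂ)
    (hφ : Continuous φ) (hφc : HasCompactSupport φ)
    (hgs : ContDiff ℝ (⊤ : ℕ∞) g) (hgc : HasCompactSupport g)
    (hφm : ∀ α : Fin n → ℕ, (∑ i, α i) ≤ N →
      (∫ x : Vec n, ((∏ i, (x i) ^ (α i) : ℝ) : ℂ) * φ x) = 0) :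
    ∃ C : ℝ, 0 < C ∧ ∀ (t : ℝ), 0 < t → t ≤ 1 → ∀ c : Vec n,
      ‖∫ y : Vec n, φ y * g (t • y + c)‖ ≤ C * t ^ N := by
  classical
  obtain ⟨M0, hM0⟩ := (hgc.iteratedFDeriv (N + 1)).exists_bound_of_continuous
    (hgs.continuous_iteratedFDeriv (by exact_mod_cast le_top))
  set M : ℝ := max M0 0 with hMdef
  have hM : ∀ z, ‖iteratedFDeriv ℝ (N + 1) g z‖ ≤ M := fun z => (hM0 z).trans (le_max_left _ _)
  have hMnn : 0 ≤ M := le_max_right _ _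
  have hKint : Integrable (fun y : Vec n => ‖φ y‖ * ‖y‖ ^ (N + 1)) :=
    ((hφ.norm.mul (continuous_norm.pow _)).integrable_of_hasCompactSupport
      (hφc.norm.mul_right))
  set K : ℝ := ∫ y : Vec n, ‖φ y‖ * ‖y‖ ^ (N + 1) with hKdef
  have hKnn : 0 ≤ K := integral_nonneg fun y => by positivity
  refine ⟨M * K / N.factorial + 1, by positivity, ?_⟩
  intro t ht ht1 c
  set g₂ : Vec n → ℂ := fun z => g (c + z) with hg₂def
  have hg₂s : ContDiff ℝ (⊤ : ℕ∞) g₂ := hgs.comp (contDiff_const.add contDiff_id)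
  set P : Vec n → ℂ := fun y => ∑ m ∈ Finset.range (N + 1),
    (m.factorial : ℝ)⁻¹ • (iteratedFDeriv ℝ m g₂ 0 (fun _ => t • y)) with hPdef
  -- Taylor remainder bound
  have hTay : ∀ y : Vec n, ‖g (t • y + c) - P y‖ ≤ M * ‖t • y‖ ^ (N + 1) / N.factorial := by
    intro y
    set v : Vec n := t • y with hvdef
    set Fy : ℝ → ℂ := fun s => g₂ (s • v) with hFydef
    have hFys : ContDiff ℝ (⊤ : ℕ∞) Fy := hg₂s.comp (contDiff_id.smul contDiff_const)
    have hFyA : Fy = g₂ ∘ (ContinuousLinearMap.toSpanSingleton ℝ v) := by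
      funext s; simp [hFydef, ContinuousLinearMap.toSpanSingleton_apply]
    have hiter : ∀ (m : ℕ) (s : ℝ),
        iteratedDeriv m Fy s = iteratedFDeriv ℝ m g₂ (s • v) (fun _ => v) := by
      intro m s
      rw [iteratedDeriv_eq_iteratedFDeriv, hFyA,
        ContinuousLinearMap.iteratedFDeriv_comp_right _ hg₂s _ (by exact_mod_cast le_top)]
      simp [ContinuousMultilinearMap.compContinuousLinearMap_apply,
        ContinuousLinearMap.toSpanSingleton_apply]
    have hud : UniqueDiffOn ℝ (Set.Icc (0:ℝ) 1) := uniqueDiffOn_Icc zero_lt_one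
    have h0mem : (0:ℝ) ∈ Set.Icc (0:ℝ) 1 := ⟨le_refl _, zero_le_one⟩
    have h1mem : (1:ℝ) ∈ Set.Icc (0:ℝ) 1 := ⟨zero_le_one, le_refl _⟩
    have hbound : ∀ s ∈ Set.Icc (0:ℝ) 1,
        ‖iteratedDerivWithin (N + 1) Fy (Set.Icc 0 1) s‖ ≤ M * ‖v‖ ^ (N + 1) := by
      intro s hs
      rw [my_iterWithin Fy hFys hud hs, hiter]
      calc ‖iteratedFDeriv ℝ (N+1) g₂ (s • v) (fun _ => v)‖
          ≤ ‖iteratedFDeriv ℝ (N+1) g₂ (s • v)‖ * ∏ _i : Fin (N+1), ‖v‖ :=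
            ContinuousMultilinearMap.le_opNorm _ _
        _ = ‖iteratedFDeriv ℝ (N+1) g₂ (s • v)‖ * ‖v‖ ^ (N+1) := by
            rw [Finset.prod_const, Finset.card_univ, Fintype.card_fin]
        _ ≤ M * ‖v‖ ^ (N+1) := by
            refine mul_le_mul_of_nonneg_right ?_ (by positivity)
            rw [show iteratedFDeriv ℝ (N+1) g₂ (s • v)
                = iteratedFDeriv ℝ (N+1) g (c + s • v) from
              my_iteratedFDeriv_const_add g hgs c (N+1) (s • v)]
            exact hM _
    have htval : taylorWithinEval Fy N (Set.Icc 0 1) 0 1 = P y := by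
      rw [taylor_within_apply]
      refine Finset.sum_congr rfl fun m _ => ?_
      rw [my_iterWithin Fy hFys hud h0mem, hiter]
      simp [hvdef]
    have hrem := taylor_mean_remainder_bound zero_le_one
      ((hFys.of_le (by exact_mod_cast le_top)).contDiffOn) h1mem hbound
    have hFy1 : Fy 1 = g (t • y + c) := by
      simp [hFydef, hg₂def, hvdef, add_comm]
    rw [htval, hFy1] at hrem
    simpa using hrem
  -- vanishing of the Taylor polynomial against φ
  have hPy : ∀ y : Vec n, φ y * P y = ∑ m ∈ Finset.range (N + 1), ∑ d : Fin m → Fin n,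
      (((m.factorial : ℝ)⁻¹ * t ^ m : ℝ) : ℂ) *
        iteratedFDeriv ℝ m g₂ 0 (fun j l => if d j = l then (1:ℝ) else 0) *
        (((∏ j, y (d j) : ℝ) : ℂ) * φ y) := by
    intro y
    rw [hPdef, Finset.mul_sum]
    refine Finset.sum_congr rfl fun m hm => ?_
    rw [my_expand n m _ (t • y), Finset.smul_sum, Finset.mul_sum]
    refine Finset.sum_congr rfl fun d _ => ?_
    have hp : (∏ j, (t • y) (d j)) = t ^ m * ∏ j, y (d j) := by
      simp [Finset.prod_mul_distrib]
    rw [hp, smul_smul, Complex.real_smul]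
    push_cast
    ring
  have hint_md : ∀ (m : ℕ) (d : Fin m → Fin n),
      Integrable (fun y : Vec n => (((∏ j, y (d j) : ℝ) : ℂ) * φ y)) := by
    intro m d
    apply Continuous.integrable_of_hasCompactSupport
    · exact (Complex.continuous_ofReal.comp (continuous_finset_prod _ fun j _ => continuous_apply (d j))).mul hφ
    · exact hφc.mul_left
  have hvan : (∫ y : Vec n, φ y * P y) = 0 := by
    rw [show (fun y : Vec n => φ y * P y) = _ from funext hPy]
    rw [integral_finset_sum _ (fun m _ =>
      integrable_finset_sum _ (fun d _ => (hint_md m d).const_mul _))]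
    refine Finset.sum_eq_zero fun m hm => ?_
    rw [integral_finset_sum _ (fun d _ => (hint_md m d).const_mul _)]
    refine Finset.sum_eq_zero fun d _ => ?_
    rw [integral_const_mul,
      my_moment_zero n N φ hφm (Nat.lt_succ_iff.mp (Finset.mem_range.mp hm)) d, mul_zero]
  have hint1 : Integrable (fun y : Vec n => φ y * g (t • y + c)) := by
    apply Continuous.integrable_of_hasCompactSupport
    · exact hφ.mul (hgs.continuous.comp (by continuity))
    · exact hφc.mul_right
  have hintP : Integrable (fun y : Vec n => φ y * P y) := by
    rw [show (fun y : Vec n => φ y * P y) = _ from funext hPy]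
    exact integrable_finset_sum _ (fun m _ =>
      integrable_finset_sum _ (fun d _ => (hint_md m d).const_mul _))
  have hsplit : (∫ y : Vec n, φ y * g (t • y + c))
      = ∫ y : Vec n, φ y * (g (t • y + c) - P y) := by
    simp_rw [mul_sub]
    rw [integral_sub hint1 hintP, hvan, sub_zero]
  rw [hsplit]
  have hGb : ∀ y : Vec n, ‖φ y * (g (t • y + c) - P y)‖ ≤
      (M * t ^ (N+1) / N.factorial) * (‖φ y‖ * ‖y‖ ^ (N+1)) := by
    intro y
    rw [norm_mul]
    calc ‖φ y‖ * ‖g (t • y + c) - P y‖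
        ≤ ‖φ y‖ * (M * ‖t • y‖ ^ (N+1) / N.factorial) :=
          mul_le_mul_of_nonneg_left (hTay y) (norm_nonneg _)
      _ = (M * t ^ (N+1) / N.factorial) * (‖φ y‖ * ‖y‖ ^ (N+1)) := by
          rw [norm_smul, Real.norm_of_nonneg ht.le, mul_pow]; ring
  have hnb := norm_integral_le_of_norm_le
    (hKint.const_mul (M * t ^ (N+1) / N.factorial)) (Filter.Eventually.of_forall hGb)
  rw [integral_const_mul] at hnb
  have htN : (0:ℝ) ≤ t ^ N := pow_nonneg ht.le N
  calc ‖∫ y : Vec n, φ y * (g (t • y + c) - P y)‖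
      ≤ M * t ^ (N+1) / N.factorial * K := hnb
    _ = (M * K / N.factorial) * (t ^ N * t) := by rw [pow_succ]; ring
    _ ≤ (M * K / N.factorial) * (t ^ N * 1) := by
        refine mul_le_mul_of_nonneg_left (mul_le_mul_of_nonneg_left ht1 htN) (by positivity)
    _ ≤ (M * K / N.factorial + 1) * t ^ N := by rw [mul_one]; nlinarith

lemma my_core (n N : ℕ) (φ ψ : Vec n → ℂ)
    (hφs : ContDiff ℝ (⊤ : ℕ∞) φ) (hφc : HasCompactSupport φ)
    (hψs : ContDiff ℝ (⊤ : ℕ∞) ψ) (hψc : HasCompactSupport ψ)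
    (hφm : ∀ α : Fin n → ℕ, (∑ i, α i) ≤ N →
      (∫ x : Vec n, ((∏ i, (x i) ^ (α i) : ℝ) : ℂ) * φ x) = 0) :
    ∃ C : ℝ, 0 < C ∧ ∀ (j j' : ℤ) (k k' : IVec n), j' ≤ j →
      ‖∫ x : Vec n, scaleJK φ j k x * (starRingEnd ℂ) (scaleJK ψ j' k' x)‖ ≤
        C * (2:ℝ) ^ (((j' - j : ℤ) : ℝ) * ((n : ℝ) / 2 + (N : ℝ))) := by
  have hgs : ContDiff ℝ (⊤ : ℕ∞) (fun z => (starRingEnd ℂ) (ψ z)) :=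
    Complex.conjCLE.toContinuousLinearMap.contDiff.comp hψs
  have hgc : HasCompactSupport (fun z => (starRingEnd ℂ) (ψ z)) :=
    hψc.comp_left (map_zero _)
  obtain ⟨C₀, hC₀, hk⟩ := my_key n N φ (fun z => (starRingEnd ℂ) (ψ z))
    hφs.continuous hφc hgs hgc hφm
  refine ⟨C₀, hC₀, ?_⟩
  intro j j' k k' hjj
  set t : ℝ := (2:ℝ) ^ (j' - j) with htdef
  have ht : 0 < t := by positivity
  have ht1 : t ≤ 1 := zpow_le_one_of_nonpos₀ one_le_two (sub_nonpos.2 hjj)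
  set c : Vec n := fun i => t * (k i : ℝ) - (k' i : ℝ) with hcdef
  set kv : Vec n := fun i => (k i : ℝ) with hkvdef
  set R : ℝ := (2:ℝ) ^ (-j) with hRdef
  have hR : 0 < R := by positivity
  set A : ℝ := (2:ℝ) ^ ((n:ℝ) * (j:ℝ) / 2) * (2:ℝ) ^ ((n:ℝ) * (j':ℝ) / 2) with hAdef
  have hA : 0 < A := by positivity
  set Fint : Vec n → ℂ :=
    fun x => scaleJK φ j k x * (starRingEnd ℂ) (scaleJK ψ j' k' x) with hFintdef
  have hpoint : ∀ y : Vec n,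
      Fint (R • (y + kv)) = (A : ℂ) * (φ y * (starRingEnd ℂ) (ψ (t • y + c))) := by
    intro y
    have harg1 : (fun i => (2:ℝ) ^ j * (R • (y + kv)) i - (k i : ℝ)) = y := by
      funext i
      simp only [Pi.smul_apply, Pi.add_apply, smul_eq_mul, hRdef, hkvdef]
      rw [← mul_assoc, ← zpow_add₀ (two_ne_zero), add_neg_cancel, zpow_zero, one_mul]
      ring
    have harg2 : (fun i => (2:ℝ) ^ j' * (R • (y + kv)) i - (k' i : ℝ)) = t • y + c := by
      funext i
      simp only [Pi.smul_apply, Pi.add_apply, smul_eq_mul, hRdef, hkvdef, hcdef, htdef]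
      rw [← mul_assoc, ← zpow_add₀ (two_ne_zero), ← sub_eq_add_neg]
      ring
    simp only [hFintdef, scaleJK]
    rw [harg1, harg2, map_mul, Complex.conj_ofReal, hAdef]
    push_cast
    ring
  have hcv1 : ∫ x : Vec n, Fint (R • x)
      = |(R ^ (Module.finrank ℝ (Vec n)))⁻¹| • ∫ x : Vec n, Fint x :=
    Measure.integral_comp_smul volume Fint R
  rw [show Module.finrank ℝ (Vec n) = n from by
    simp [Module.finrank_fintype_fun_eq_card]] at hcv1
  have hcv2 : ∫ y : Vec n, Fint (R • (y + kv)) = ∫ y : Vec n, Fint (R • y) :=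
    integral_add_right_eq_self (fun y => Fint (R • y)) kv
  have hIeq : (∫ x : Vec n, Fint x) = (R ^ n) • ∫ y : Vec n, Fint (R • (y + kv)) := by
    rw [hcv2, hcv1, abs_of_pos (by positivity : (0:ℝ) < (R ^ n)⁻¹), smul_smul,
      mul_inv_cancel₀ (by positivity), one_smul]
  have hinner : (∫ y : Vec n, Fint (R • (y + kv)))
      = (A : ℂ) * ∫ y : Vec n, φ y * (starRingEnd ℂ) (ψ (t • y + c)) := by
    rw [show (fun y : Vec n => Fint (R • (y + kv)))
      = fun y => (A:ℂ) * (φ y * (starRingEnd ℂ) (ψ (t • y + c))) from funext hpoint]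
    exact integral_const_mul _ _
  have hnorm : ‖∫ x : Vec n, Fint x‖
      = R ^ n * A * ‖∫ y : Vec n, φ y * (starRingEnd ℂ) (ψ (t • y + c))‖ := by
    rw [hIeq, hinner, norm_smul, norm_mul, Real.norm_of_nonneg (by positivity : (0:ℝ) ≤ R^n)]
    simp only [Complex.norm_real]
    rw [Real.norm_of_nonneg hA.le]
    ring
  have hexp : R ^ n * A * t ^ N
      = (2:ℝ) ^ (((j' - j : ℤ) : ℝ) * ((n : ℝ) / 2 + (N : ℝ))) := by
    have h1 : R ^ n = (2:ℝ) ^ ((-(j:ℝ)) * (n:ℝ)) := by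
      rw [hRdef, ← Real.rpow_intCast 2 (-j), ← Real.rpow_natCast _ n,
        ← Real.rpow_mul (by norm_num)]
      push_cast
      ring_nf
    have h2 : t ^ N = (2:ℝ) ^ (((j':ℝ) - (j:ℝ)) * (N:ℝ)) := by
      rw [htdef, ← Real.rpow_intCast 2 (j' - j), ← Real.rpow_natCast _ N,
        ← Real.rpow_mul (by norm_num)]
      push_cast
      ring_nf
    rw [h1, h2, hAdef, ← Real.rpow_add two_pos, ← Real.rpow_add two_pos,
      ← Real.rpow_add two_pos]
    congr 1
    push_cast
    ring
  calc ‖∫ x : Vec n, Fint x‖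
      = R ^ n * A * ‖∫ y : Vec n, φ y * (starRingEnd ℂ) (ψ (t • y + c))‖ := hnorm
    _ ≤ R ^ n * A * (C₀ * t ^ N) :=
        mul_le_mul_of_nonneg_left (hk t ht ht1 c) (by positivity)
    _ = C₀ * (R ^ n * A * t ^ N) := by ring
    _ = C₀ * (2:ℝ) ^ (((j' - j : ℤ) : ℝ) * ((n : ℝ) / 2 + (N : ℝ))) := by rw [hexp]

/-- Lemma `le9`, Meyer: almost-orthogonality of two compactly supported
smooth families with `N` vanishing moments. -/
theorem statement1 (n : ℕ) (hn : 1 ≤ n) (N : ℕ) (hN : 1 ≤ N)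
    (φ ψ : Vec n → ℂ)
    (hφs : ContDiff ℝ (⊤ : ℕ∞) φ) (hφc : HasCompactSupport φ)
    (hψs : ContDiff ℝ (⊤ : ℕ∞) ψ) (hψc : HasCompactSupport ψ)
    (hφm : ∀ α : Fin n → ℕ, (∑ i, α i) ≤ N →
      (∫ x : Vec n, ((∏ i, (x i) ^ (α i) : ℝ) : ℂ) * φ x) = 0)
    (hψm : ∀ α : Fin n → ℕ, (∑ i, α i) ≤ N →
      (∫ x : Vec n, ((∏ i, (x i) ^ (α i) : ℝ) : ℂ) * ψ x) = 0) :
    ∃ C : ℝ, 0 < C ∧ ∀ (j j' : ℤ) (k k' : IVec n),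
      ‖(∫ x : Vec n, scaleJK φ j k x * (starRingEnd ℂ) (scaleJK ψ j' k' x))‖ ≤
        C * (2:ℝ) ^ (-(((|j - j'| : ℤ) : ℝ)) * ((n : ℝ) / 2 + (N : ℝ))) *
          (((2:ℝ) ^ (-j) + (2:ℝ) ^ (-j')) /
              ((2:ℝ) ^ (-j) + (2:ℝ) ^ (-j') +
                enorm2 (fun i => (2:ℝ) ^ (-j) * (k i : ℝ) - (2:ℝ) ^ (-j') * (k' i : ℝ)))) ^
            ((n : ℝ) + (N : ℝ)) := by
  obtain ⟨C₁, hC₁, h₁⟩ := my_core n N φ ψ hφs hφc hψs hψc hφm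
  obtain ⟨C₂, hC₂, h₂⟩ := my_core n N ψ φ hψs hψc hφs hφc hψm
  obtain ⟨R₁, hR₁⟩ := hφc.isBounded.subset_closedBall 0
  obtain ⟨R₂, hR₂⟩ := hψc.isBounded.subset_closedBall 0
  set R : ℝ := max (max R₁ R₂) 0 with hRdef
  have hR0 : 0 ≤ R := le_max_right _ _
  have hRφ : tsupport φ ⊆ Metric.closedBall 0 R :=
    hR₁.trans (Metric.closedBall_subset_closedBall ((le_max_left _ _).trans (le_max_left _ _)))
  have hRψ : tsupport ψ ⊆ Metric.closedBall 0 R :=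
    hR₂.trans (Metric.closedBall_subset_closedBall ((le_max_right _ _).trans (le_max_left _ _)))
  set D : ℝ := Real.sqrt n * R with hDdef
  have hD0 : 0 ≤ D := mul_nonneg (Real.sqrt_nonneg _) hR0
  set p : ℝ := (n:ℝ) + (N:ℝ) with hpdef
  have hp0 : 0 ≤ p := by positivity
  have hmaxC : 0 < max C₁ C₂ := lt_max_of_lt_left hC₁
  have h1D : (0:ℝ) < 1 + D := by linarith
  refine ⟨(max C₁ C₂) * (1 + D) ^ p, mul_pos hmaxC (Real.rpow_pos_of_pos h1D p), ?_⟩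
  intro j j' k k'
  set S : ℝ := (2:ℝ) ^ (-j) + (2:ℝ) ^ (-j') with hSdef
  have hS : 0 < S := by positivity
  set v : Vec n := fun i => (2:ℝ) ^ (-j) * (k i : ℝ) - (2:ℝ) ^ (-j') * (k' i : ℝ) with hvdef
  have hdE0 : (0:ℝ) ≤ enorm2 v := Real.sqrt_nonneg _
  by_cases hfar : D * S < enorm2 v
  · -- supports are disjoint: integral is zero
    have h2j : (2:ℝ) ^ (-j) * (2:ℝ) ^ j = 1 := by
      rw [← zpow_add₀ two_ne_zero, neg_add_cancel, zpow_zero]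
    have h2j' : (2:ℝ) ^ (-j') * (2:ℝ) ^ j' = 1 := by
      rw [← zpow_add₀ two_ne_zero, neg_add_cancel, zpow_zero]
    have hzero : ∀ x : Vec n,
        scaleJK φ j k x * (starRingEnd ℂ) (scaleJK ψ j' k' x) = 0 := by
      intro x
      by_contra hne
      have hφne : φ (fun i => (2:ℝ) ^ j * x i - (k i : ℝ)) ≠ 0 := by
        intro h0; exact hne (by simp [scaleJK, h0])
      have hψne : ψ (fun i => (2:ℝ) ^ j' * x i - (k' i : ℝ)) ≠ 0 := by
        intro h0; exact hne (by simp [scaleJK, h0])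
      set a : Vec n := fun i => (2:ℝ) ^ j * x i - (k i : ℝ) with hadef
      set b : Vec n := fun i => (2:ℝ) ^ j' * x i - (k' i : ℝ) with hbdef
      have ha : ‖a‖ ≤ R := by
        have := hRφ (subset_tsupport φ (Function.mem_support.2 hφne))
        simpa [Metric.mem_closedBall, dist_zero_right] using this
      have hb : ‖b‖ ≤ R := by
        have := hRψ (subset_tsupport ψ (Function.mem_support.2 hψne))
        simpa [Metric.mem_closedBall, dist_zero_right] using this
      have hvi : ∀ i, |v i| ≤ R * S := by
        intro i
        have hai : |a i| ≤ R := le_trans (by simpa using norm_le_pi_norm a i) ha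
        have hbi : |b i| ≤ R := le_trans (by simpa using norm_le_pi_norm b i) hb
        have hva : v i = (2:ℝ) ^ (-j') * b i - (2:ℝ) ^ (-j) * a i := by
          simp only [hvdef, hadef, hbdef]
          linear_combination (x i) * h2j - (x i) * h2j'
        rw [hva]
        have t1 : |(2:ℝ) ^ (-j') * b i - (2:ℝ) ^ (-j) * a i| ≤
            |(2:ℝ) ^ (-j') * b i| + |(2:ℝ) ^ (-j) * a i| := abs_sub _ _
        rw [abs_mul, abs_mul, abs_of_pos (show (0:ℝ) < (2:ℝ)^(-j') by positivity),
          abs_of_pos (show (0:ℝ) < (2:ℝ)^(-j) by positivity)] at t1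
        have t2 : (2:ℝ)^(-j') * |b i| ≤ (2:ℝ)^(-j') * R :=
          mul_le_mul_of_nonneg_left hbi (by positivity)
        have t3 : (2:ℝ)^(-j) * |a i| ≤ (2:ℝ)^(-j) * R :=
          mul_le_mul_of_nonneg_left hai (by positivity)
        rw [hSdef]; nlinarith
      have hle : enorm2 v ≤ D * S := by
        have hsq : ∀ i : Fin n, v i ^ 2 ≤ (R * S) ^ 2 := by
          intro i
          rw [← _root_.sq_abs (v i)]
          exact pow_le_pow_left₀ (abs_nonneg _) (hvi i) 2
        calc enorm2 v = Real.sqrt (∑ i, v i ^ 2) := rfl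
          _ ≤ Real.sqrt (∑ _i : Fin n, (R * S) ^ 2) :=
              Real.sqrt_le_sqrt (Finset.sum_le_sum fun i _ => hsq i)
          _ = Real.sqrt ((n:ℝ) * (R * S) ^ 2) := by
              rw [Finset.sum_const, Finset.card_univ, Fintype.card_fin, nsmul_eq_mul]
          _ = Real.sqrt n * (R * S) := by
              rw [Real.sqrt_mul (by positivity), Real.sqrt_sq (by positivity)]
          _ = D * S := by rw [hDdef]; ring
      exact absurd hfar (not_lt.2 hle)
    rw [show (fun x : Vec n => scaleJK φ j k x * (starRingEnd ℂ) (scaleJK ψ j' k' x))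
      = (fun _ : Vec n => (0:ℂ)) from funext hzero]
    rw [integral_zero]
    rw [norm_zero]
    refine mul_nonneg (mul_nonneg ?_ (Real.rpow_nonneg (by norm_num) _))
      (Real.rpow_nonneg (div_nonneg hS.le (add_nonneg hS.le hdE0)) _)
    positivity
  · push_neg at hfar
    have hratio : 1 ≤ S / (S + enorm2 v) * (1 + D) := by
      rw [div_mul_eq_mul_div, le_div_iff₀ (by positivity)]
      nlinarith
    have hr0 : 0 ≤ S / (S + enorm2 v) := div_nonneg hS.le (by positivity)
    have hrp : 1 ≤ (S / (S + enorm2 v)) ^ p * (1 + D) ^ p := by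
      rw [← Real.mul_rpow hr0 h1D.le]
      calc (1:ℝ) = 1 ^ p := (Real.one_rpow p).symm
        _ ≤ _ := Real.rpow_le_rpow zero_le_one hratio hp0
    have hrpn : 0 ≤ (S / (S + enorm2 v)) ^ p := Real.rpow_nonneg hr0 _
    rcases le_total j' j with hjj | hjj
    · have hb := h₁ j j' k k' hjj
      have hE : (-(((|j - j'| : ℤ) : ℝ)) * ((n : ℝ) / 2 + (N : ℝ)))
          = ((j' - j : ℤ) : ℝ) * ((n : ℝ) / 2 + (N : ℝ)) := by
        rw [abs_of_nonneg (sub_nonneg.2 hjj)]; push_cast; ring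
      rw [hE]
      have hX0 : (0:ℝ) ≤ (2:ℝ) ^ (((j' - j : ℤ) : ℝ) * ((n : ℝ) / 2 + (N : ℝ))) :=
        Real.rpow_nonneg (by norm_num) _
      calc ‖∫ x : Vec n, scaleJK φ j k x * (starRingEnd ℂ) (scaleJK ψ j' k' x)‖
          ≤ C₁ * (2:ℝ) ^ (((j' - j : ℤ) : ℝ) * ((n : ℝ) / 2 + (N : ℝ))) := hb
        _ ≤ (max C₁ C₂ * ((S / (S + enorm2 v)) ^ p * (1 + D) ^ p)) *
              (2:ℝ) ^ (((j' - j : ℤ) : ℝ) * ((n : ℝ) / 2 + (N : ℝ))) := by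
            refine mul_le_mul_of_nonneg_right ?_ hX0
            calc C₁ = C₁ * 1 := (mul_one _).symm
              _ ≤ max C₁ C₂ * ((S / (S + enorm2 v)) ^ p * (1 + D) ^ p) :=
                  mul_le_mul (le_max_left _ _) hrp zero_le_one hmaxC.le
        _ = max C₁ C₂ * (1 + D) ^ p *
              (2:ℝ) ^ (((j' - j : ℤ) : ℝ) * ((n : ℝ) / 2 + (N : ℝ))) *
              (S / (S + enorm2 v)) ^ p := by ring
    · have hconj : (∫ x : Vec n, scaleJK φ j k x * (starRingEnd ℂ) (scaleJK ψ j' k' x))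
          = (starRingEnd ℂ)
              (∫ x : Vec n, scaleJK ψ j' k' x * (starRingEnd ℂ) (scaleJK φ j k x)) := by
        rw [← integral_conj]
        congr 1
        funext x
        rw [map_mul, Complex.conj_conj, mul_comm]
      rw [hconj, RCLike.norm_conj]
      have hb := h₂ j' j k' k hjj
      have hE : (-(((|j - j'| : ℤ) : ℝ)) * ((n : ℝ) / 2 + (N : ℝ)))
          = ((j - j' : ℤ) : ℝ) * ((n : ℝ) / 2 + (N : ℝ)) := by
        rw [abs_sub_comm, abs_of_nonneg (sub_nonneg.2 hjj)]; push_cast; ring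
      rw [hE]
      have hX0 : (0:ℝ) ≤ (2:ℝ) ^ (((j - j' : ℤ) : ℝ) * ((n : ℝ) / 2 + (N : ℝ))) :=
        Real.rpow_nonneg (by norm_num) _
      calc ‖∫ x : Vec n, scaleJK ψ j' k' x * (starRingEnd ℂ) (scaleJK φ j k x)‖
          ≤ C₂ * (2:ℝ) ^ (((j - j' : ℤ) : ℝ) * ((n : ℝ) / 2 + (N : ℝ))) := hb
        _ ≤ (max C₁ C₂ * ((S / (S + enorm2 v)) ^ p * (1 + D) ^ p)) *
              (2:ℝ) ^ (((j - j' : ℤ) : ℝ) * ((n : ℝ) / 2 + (N : ℝ))) := by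
            refine mul_le_mul_of_nonneg_right ?_ hX0
            calc C₂ = C₂ * 1 := (mul_one _).symm
              _ ≤ max C₁ C₂ * ((S / (S + enorm2 v)) ^ p * (1 + D) ^ p) :=
                  mul_le_mul (le_max_right _ _) hrp zero_le_one hmaxC.le
        _ = max C₁ C₂ * (1 + D) ^ p *
              (2:ℝ) ^ (((j - j' : ℤ) : ℝ) * ((n : ℝ) / 2 + (N : ℝ))) *
              (S / (S + enorm2 v)) ^ p := by ring
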